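/- Fix n ≥ 1 and let S = { (i,j) : 1 ≤ i < j ≤ n }. The collection Bic(n) of biclosed subsets of S (X closed and S\X closed, where closed means (i,j),(j,k) ∈ X ⇒ (i,k) ∈ X), ordered by inclusion, is a graded lattice whose rank function is X ↦ |X|; in particular, in any covering relation X ⋖ Y in Bic(n) one has |Y| = |X| + 1. -/

import Mathlib

/-- A biclosed subset of `S = {(i,j) : i < j}` in `Fin n × Fin n`: it consists of
pairs `(i,j)` with `i < j`, it is closed under composition
`(i,j),(j,k) ↦ (i,k)`, and its complement in `S` is also closed. -/
def Biclosed (n : ℕ) (X : Finset (Fin n × Fin n)) : Prop :=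
  (∀ p ∈ X, p.1 < p.2) ∧
  (∀ i j k : Fin n, (i, j) ∈ X → (j, k) ∈ X → (i, k) ∈ X) ∧
  (∀ i j k : Fin n, i < j → j < k → (i, j) ∉ X → (j, k) ∉ X → (i, k) ∉ X)

namespace BicAux

variable {n : ℕ}

lemma biclosed_empty : Biclosed n ∅ :=
  ⟨by simp, by simp, by simp⟩

/-- relation underlying the join -/
def R (X Y : Finset (Fin n × Fin n)) (a b : Fin n) : Prop := (a, b) ∈ X ∪ Y

noncomputable def bsup (X Y : Finset (Fin n × Fin n)) : Finset (Fin n × Fin n) :=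
  letI := Classical.decPred fun p : Fin n × Fin n => Relation.TransGen (R X Y) p.1 p.2
  Finset.univ.filter fun p => Relation.TransGen (R X Y) p.1 p.2

lemma mem_bsup {X Y : Finset (Fin n × Fin n)} {p : Fin n × Fin n} :
    p ∈ bsup X Y ↔ Relation.TransGen (R X Y) p.1 p.2 := by
  classical
  simp [bsup]

section

variable {X Y : Finset (Fin n × Fin n)}

lemma R_lt (hX : Biclosed n X) (hY : Biclosed n Y) {a b : Fin n} (h : R X Y a b) : a < b := by
  rcases Finset.mem_union.1 h with h | h
  · exact hX.1 _ h
  · exact hY.1 _ h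

lemma tg_lt (hX : Biclosed n X) (hY : Biclosed n Y) {a b : Fin n} (h : Relation.TransGen (R X Y) a b) : a < b := by
  induction h with
  | single h => exact R_lt hX hY h
  | tail _ h ih => exact lt_trans ih (R_lt hX hY h)

lemma R_split (hX : Biclosed n X) (hY : Biclosed n Y) {a b c : Fin n} (h : R X Y a c) (hab : a < b) (hbc : b < c) :
    R X Y a b ∨ R X Y b c := by
  by_contra hcon
  push_neg at hcon
  rcases Finset.mem_union.1 h with h | h
  · exact hX.2.2 a b c hab hbc (fun hm => hcon.1 (Finset.mem_union_left _ hm))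
      (fun hm => hcon.2 (Finset.mem_union_left _ hm)) h
  · exact hY.2.2 a b c hab hbc (fun hm => hcon.1 (Finset.mem_union_right _ hm))
      (fun hm => hcon.2 (Finset.mem_union_right _ hm)) h

lemma tg_split (hX : Biclosed n X) (hY : Biclosed n Y) {i k : Fin n} (h : Relation.TransGen (R X Y) i k) :
    ∀ j, i < j → j < k → Relation.TransGen (R X Y) i j ∨ Relation.TransGen (R X Y) j k := by
  induction h with
  | single h =>
    intro j hij hjk
    rcases R_split hX hY h hij hjk with h' | h'
    · exact Or.inl (Relation.TransGen.single h')
    · exact Or.inr (Relation.TransGen.single h')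
  | @tail m c htm hmc ih =>
    intro j hij hjc
    rcases lt_trichotomy j m with hjm | rfl | hmj
    · rcases ih j hij hjm with h' | h'
      · exact Or.inl h'
      · exact Or.inr (h'.tail hmc)
    · exact Or.inl htm
    · rcases R_split hX hY hmc hmj hjc with h' | h'
      · exact Or.inl (htm.tail h')
      · exact Or.inr (Relation.TransGen.single h')

lemma biclosed_bsup (hX : Biclosed n X) (hY : Biclosed n Y) : Biclosed n (bsup X Y) := by
  refine ⟨?_, ?_, ?_⟩
  · intro p hp
    exact tg_lt hX hY (mem_bsup.1 hp)
  · intro i j k h1 h2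
    exact mem_bsup.2 ((mem_bsup.1 h1).trans (mem_bsup.1 h2))
  · intro i j k hij hjk h1 h2 h3
    rcases tg_split hX hY (mem_bsup.1 h3) j hij hjk with h | h
    · exact h1 (mem_bsup.2 h)
    · exact h2 (mem_bsup.2 h)

lemma subset_bsup_left : X ⊆ bsup X Y := by
  intro p hp
  obtain ⟨a, b⟩ := p
  exact mem_bsup.2 (Relation.TransGen.single (Finset.mem_union_left _ hp))

lemma subset_bsup_right : Y ⊆ bsup X Y := by
  intro p hp
  obtain ⟨a, b⟩ := p
  exact mem_bsup.2 (Relation.TransGen.single (Finset.mem_union_right _ hp))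

lemma bsup_subset {Z : Finset (Fin n × Fin n)} (hZ : Biclosed n Z)
    (h1 : X ⊆ Z) (h2 : Y ⊆ Z) : bsup X Y ⊆ Z := by
  intro p hp
  obtain ⟨a, b⟩ := p
  have h : Relation.TransGen (R X Y) a b := mem_bsup.1 hp
  clear hp
  induction h with
  | single h =>
    rcases Finset.mem_union.1 h with h | h
    exacts [h1 h, h2 h]
  | @tail m c htm hmc ih =>
    rcases Finset.mem_union.1 hmc with h | h
    · exact hZ.2.1 _ _ _ ih (h1 h)
    · exact hZ.2.1 _ _ _ ih (h2 h)

end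

/-- the linear order induced by a biclosed set -/
def prec (X : Finset (Fin n × Fin n)) (i j : Fin n) : Prop :=
  (i < j ∧ (i, j) ∉ X) ∨ (j < i ∧ (j, i) ∈ X)

lemma prec_irrefl {X : Finset (Fin n × Fin n)} {i : Fin n} : ¬ prec X i i := by
  simp [prec]

lemma prec_trans {X : Finset (Fin n × Fin n)} (hX : Biclosed n X) {i j k : Fin n}
    (h1 : prec X i j) (h2 : prec X j k) : prec X i k := by
  rcases h1 with ⟨hij, m1⟩ | ⟨hji, m1⟩ <;> rcases h2 with ⟨hjk, m2⟩ | ⟨hkj, m2⟩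
  · exact Or.inl ⟨lt_trans hij hjk, hX.2.2 i j k hij hjk m1 m2⟩
  · rcases lt_trichotomy i k with hik | rfl | hki
    · exact Or.inl ⟨hik, fun hm => m1 (hX.2.1 i k j hm m2)⟩
    · exact absurd m2 m1
    · refine Or.inr ⟨hki, ?_⟩
      by_contra hm
      exact hX.2.2 k i j hki hij hm m1 m2
  · rcases lt_trichotomy i k with hik | rfl | hki
    · exact Or.inl ⟨hik, fun hm => m2 (hX.2.1 j i k m1 hm)⟩
    · exact absurd m1 m2
    · refine Or.inr ⟨hki, ?_⟩
      by_contra hm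
      exact hX.2.2 j k i hjk hki m2 hm m1
  · exact Or.inr ⟨lt_trans hkj hji, hX.2.1 k j i m2 m1⟩

noncomputable def rk (X : Finset (Fin n × Fin n)) (i : Fin n) : ℕ :=
  letI := Classical.decPred fun j : Fin n => prec X j i
  (Finset.univ.filter fun j => prec X j i).card

lemma rk_lt_rk {X : Finset (Fin n × Fin n)} (hX : Biclosed n X) {i j : Fin n}
    (h : prec X i j) : rk X i < rk X j := by
  classical
  unfold rk
  refine Finset.card_lt_card ?_
  rw [Finset.ssubset_iff_of_subset ?sub]
  case sub =>
    intro x hx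
    simp only [Finset.mem_filter, Finset.mem_univ, true_and] at hx ⊢
    exact prec_trans hX hx h
  refine ⟨i, ?_, ?_⟩
  · simp only [Finset.mem_filter, Finset.mem_univ, true_and]
    exact h
  · simp only [Finset.mem_filter, Finset.mem_univ, true_and]
    exact prec_irrefl

lemma mem_iff_rk {X : Finset (Fin n × Fin n)} (hX : Biclosed n X) {i j : Fin n}
    (hij : i < j) : (i, j) ∈ X ↔ rk X j < rk X i := by
  constructor
  · intro hm
    exact rk_lt_rk hX (Or.inr ⟨hij, hm⟩)
  · intro hr
    by_contra hm
    have := rk_lt_rk hX (Or.inl ⟨hij, hm⟩)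
    omega

lemma exists_step {X Y : Finset (Fin n × Fin n)} (hX : Biclosed n X) (hY : Biclosed n Y)
    (hXY : X ⊆ Y) (hne : X ≠ Y) :
    ∃ p, p ∈ Y ∧ p ∉ X ∧ Biclosed n (insert p X) := by
  classical
  have hD : (Y \ X).Nonempty := by
    rw [Finset.sdiff_nonempty]
    intro h
    exact hne (Finset.Subset.antisymm hXY h)
  obtain ⟨p, hpD, hmin⟩ := Finset.exists_min_image (Y \ X) (fun q => rk X q.2 - rk X q.1) hD
  obtain ⟨a, b⟩ := p
  rw [Finset.mem_sdiff] at hpD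
  obtain ⟨haY, haX⟩ := hpD
  have hab : a < b := hY.1 _ haY
  have hra : rk X a < rk X b := rk_lt_rk hX (Or.inl ⟨hab, haX⟩)
  have hmin' : ∀ c d : Fin n, (c, d) ∈ Y → (c, d) ∉ X →
      rk X b - rk X a ≤ rk X d - rk X c := by
    intro c d h1 h2
    exact hmin (c, d) (Finset.mem_sdiff.2 ⟨h1, h2⟩)
  refine ⟨(a, b), haY, haX, ?_, ?_, ?_⟩
  · intro q hq
    rcases Finset.mem_insert.1 hq with rfl | hq
    · exact hab
    · exact hX.1 _ hq
  · intro i j k h1 h2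
    rcases Finset.mem_insert.1 h1 with heq1 | hm1
    · rw [Prod.mk.injEq] at heq1
      obtain ⟨rfl, rfl⟩ := heq1
      rcases Finset.mem_insert.1 h2 with heq2 | hm2
      · rw [Prod.mk.injEq] at heq2
        exact absurd heq2.1 hab.ne'
      · have hbk : j < k := hX.1 _ hm2
        have hak : i < k := lt_trans hab hbk
        have h3 : (i, k) ∈ X := by
          by_contra hc
          have hY1 : (i, k) ∈ Y := hY.2.1 i j k haY (hXY hm2)
          have e1 : rk X i < rk X k := rk_lt_rk hX (Or.inl ⟨hak, hc⟩)
          have e2 : rk X k < rk X j := (mem_iff_rk hX hbk).1 hm2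
          have := hmin' i k hY1 hc
          omega
        exact Finset.mem_insert_of_mem h3
    · rcases Finset.mem_insert.1 h2 with heq2 | hm2
      · rw [Prod.mk.injEq] at heq2
        obtain ⟨rfl, rfl⟩ := heq2
        have hia : i < j := hX.1 _ hm1
        have h3 : (i, k) ∈ X := by
          by_contra hc
          have hY1 : (i, k) ∈ Y := hY.2.1 i j k (hXY hm1) haY
          have e1 : rk X i < rk X k := rk_lt_rk hX (Or.inl ⟨lt_trans hia hab, hc⟩)
          have e2 : rk X j < rk X i := (mem_iff_rk hX hia).1 hm1
          have := hmin' i k hY1 hc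
          omega
        exact Finset.mem_insert_of_mem h3
      · exact Finset.mem_insert_of_mem (hX.2.1 i j k hm1 hm2)
  · intro i j k hij hjk h1 h2 h3
    have m1 : (i, j) ∉ X := fun hc => h1 (Finset.mem_insert_of_mem hc)
    have m2 : (j, k) ∉ X := fun hc => h2 (Finset.mem_insert_of_mem hc)
    rcases Finset.mem_insert.1 h3 with heq | hm
    · rw [Prod.mk.injEq] at heq
      obtain ⟨rfl, rfl⟩ := heq
      have e1 : rk X i < rk X j := rk_lt_rk hX (Or.inl ⟨hij, m1⟩)
      have e2 : rk X j < rk X k := rk_lt_rk hX (Or.inl ⟨hjk, m2⟩)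
      have hYsplit : (i, j) ∈ Y ∨ (j, k) ∈ Y := by
        by_contra hc
        push_neg at hc
        exact hY.2.2 i j k hij hjk hc.1 hc.2 haY
      rcases hYsplit with hYm | hYm
      · have := hmin' i j hYm m1
        omega
      · have := hmin' j k hYm m2
        omega
    · exact hX.2.2 i j k hij hjk m1 m2 hm

noncomputable def bicSS (n : ℕ) : SemilatticeSup {X : Finset (Fin n × Fin n) // Biclosed n X} where
  le a b := a.1 ⊆ b.1
  le_refl a := Finset.Subset.refl _
  le_trans a b c h1 h2 := Finset.Subset.trans h1 h2
  le_antisymm a b h1 h2 := Subtype.ext (Finset.Subset.antisymm h1 h2)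
  sup a b := ⟨bsup a.1 b.1, biclosed_bsup a.2 b.2⟩
  le_sup_left a b := subset_bsup_left
  le_sup_right a b := subset_bsup_right
  sup_le a b c h1 h2 := bsup_subset c.2 h1 h2

noncomputable def bicLat (n : ℕ) : Lattice {X : Finset (Fin n × Fin n) // Biclosed n X} := by
  classical
  letI := bicSS n
  letI : Fintype {X : Finset (Fin n × Fin n) // Biclosed n X} := Fintype.ofFinite _
  exact
  { bicSS n with
    inf := fun a b =>
      (Finset.univ.filter fun c : {X : Finset (Fin n × Fin n) // Biclosed n X} =>
          c.1 ⊆ a.1 ∧ c.1 ⊆ b.1).sup'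
        ⟨⟨∅, biclosed_empty⟩, by simp; exact ⟨Finset.empty_subset _, Finset.empty_subset _⟩⟩ id
    inf_le_left := fun a b =>
      Finset.sup'_le _ _ fun c hc => ((Finset.mem_filter.1 hc).2).1
    inf_le_right := fun a b =>
      Finset.sup'_le _ _ fun c hc => ((Finset.mem_filter.1 hc).2).2
    le_inf := fun a b c h1 h2 =>
      Finset.le_sup' id (Finset.mem_filter.2 ⟨Finset.mem_univ _, h1, h2⟩) }

end BicAux

/-- `Bic(n)`, ordered by inclusion, is a lattice graded by cardinality:
in every covering relation the cardinality goes up by exactly one. -/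
theorem stmt_6 (n : ℕ) (hn : 1 ≤ n) :
    ∃ inst : Lattice {X : Finset (Fin n × Fin n) // Biclosed n X},
      (∀ a b : {X : Finset (Fin n × Fin n) // Biclosed n X},
        (letI := inst; a ≤ b) ↔ a.1 ⊆ b.1) ∧
      (∀ a b : {X : Finset (Fin n × Fin n) // Biclosed n X},
        (letI := inst; a ⋖ b) → b.1.card = a.1.card + 1) := by
  refine ⟨BicAux.bicLat n, fun a b => Iff.rfl, ?_⟩
  letI := BicAux.bicLat n
  intro a b hcov
  obtain ⟨hle, hnle⟩ := lt_iff_le_not_ge.mp hcov.1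
  have hne : a.1 ≠ b.1 := fun h => hnle (le_of_eq (Subtype.ext h.symm))
  obtain ⟨z, hzY, hzX, hbc⟩ := BicAux.exists_step a.2 b.2 hle hne
  set c : {X : Finset (Fin n × Fin n) // Biclosed n X} := ⟨insert z a.1, hbc⟩ with hc
  have hac : a < c := lt_iff_le_not_ge.mpr
    ⟨Finset.subset_insert _ _, fun h => hzX (h (Finset.mem_insert_self _ _))⟩
  have hcb : c ≤ b := Finset.insert_subset hzY hle
  have hbc' : b ≤ c := by
    by_contra h
    exact hcov.2 hac (lt_iff_le_not_ge.mpr ⟨hcb, h⟩)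
  have hbeq : b.1 = insert z a.1 := Finset.Subset.antisymm hbc' hcb
  rw [hbeq, Finset.card_insert_of_notMem hzX]
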